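/- Let a,b,c,d be points on the unit circle S¹ occurring in this positive order with ac ≠ bd, let f = LIS[a,c,b,d] be the intersection point of the Euclidean lines L[a,c] and L[b,d], and suppose f ≠ 0. If m ∈ J*[a,c] ∩ J*[b,d], then f ∈ 𝔹² and m is the hyperbolic midpoint of 0 and f, i.e., ρ(0,m) = ρ(m,f) = ρ(0,f)/2. -/

import Mathlib

open ComplexConjugate

/-- The intersection point of the Euclidean lines through `a, b` and through `c, d`. -/
noncomputable def LIS (a b c d : ℂ) : ℂ :=
  ((conj a * b - a * conj b) * (c - d) - (conj c * d - c * conj d) * (a - b)) /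
    ((conj a - conj b) * (c - d) - (conj c - conj d) * (a - b))

open scoped Classical in
/-- The hyperbolic line in the unit disk with endpoints `a, c` on the unit circle. -/
noncomputable def Jstar (a c : ℂ) : Set ℂ :=
  if c = -a then
    {z : ℂ | ‖z‖ < 1 ∧ ∃ r : ℝ, z / a = (r : ℂ)}
  else
    {z : ℂ | ‖z‖ < 1 ∧
      ((‖z‖ : ℂ) ^ 2 + 1 =
        conj (2 * (a - c) / (a * conj c - conj a * c)) * z +
          (2 * (a - c) / (a * conj c - conj a * c)) * conj z)}

/-- The hyperbolic metric of the unit disk. -/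
noncomputable def rho (x y : ℂ) : ℝ :=
  2 * Real.arsinh (‖x - y‖ /
    Real.sqrt ((1 - ‖x‖ ^ 2) * (1 - ‖y‖ ^ 2)))

lemma exp_ne_exp (θ φ : ℝ) (h1 : θ < φ) (h2 : φ < θ + 2*Real.pi) :
    Complex.exp (Complex.I * θ) ≠ Complex.exp (Complex.I * φ) := by
  intro h
  obtain ⟨n, hn⟩ := Complex.exp_eq_exp_iff_exists_int.mp h
  have him := congrArg Complex.im hn
  simp [Complex.add_im, Complex.mul_im, Complex.mul_re] at him
  have hpi := Real.pi_pos
  have hn0 : (n:ℝ) < 0 := by nlinarith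
  have hn1 : (-1:ℝ) < n := by nlinarith
  have : (n:ℤ) < 0 := by exact_mod_cast hn0
  have : (-1:ℤ) < n := by exact_mod_cast hn1
  omega

lemma conj_exp (θ : ℝ) : conj (Complex.exp (Complex.I * θ)) = (Complex.exp (Complex.I * θ))⁻¹ := by
  rw [← Complex.exp_conj, ← Complex.exp_neg]
  congr 1
  simp [map_mul, Complex.conj_I, Complex.conj_ofReal]

lemma jstar_eq (a c m : ℂ) (ha : conj a = a⁻¹) (hc : conj c = c⁻¹)
    (ha0 : a ≠ 0) (hc0 : c ≠ 0) (hac : a ≠ c) (hm : m ∈ Jstar a c) :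
    ‖m‖ < 1 ∧
      m + a*c*conj m = ((‖m‖:ℂ)^2+1)/2 * (a+c) := by
  by_cases hca : c = -a
  · rw [Jstar, if_pos hca] at hm
    obtain ⟨h1, r, hr⟩ := hm
    have hma : m = r * a := by field_simp at hr; linear_combination hr
    refine ⟨h1, ?_⟩
    have hac0 : a + c = 0 := by rw [hca]; ring
    rw [hac0, hma, hca, map_mul, ha, Complex.conj_ofReal]
    field_simp
    ring
  · rw [Jstar, if_neg hca] at hm
    obtain ⟨h1, h2⟩ := hm
    have hacs : a + c ≠ 0 := fun h => hca (by linear_combination h)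
    have hden : a * conj c - conj a * c ≠ 0 := by
      rw [ha, hc]
      intro h
      apply hac
      have : (a - c) * (a + c) = 0 := by
        field_simp at h
        linear_combination h
      rcases mul_eq_zero.mp this with h' | h'
      · linear_combination h'
      · exact absurd h' hacs
    have e1 : 2 * (a - c) / (a * conj c - conj a * c) = 2*a*c/(a+c) := by
      rw [div_eq_div_iff hden hacs, ha, hc]
      field_simp
      ring
    have e2 : conj (2 * (a - c) / (a * conj c - conj a * c)) = 2/(a+c) := by
      rw [e1, map_div₀, map_mul, map_mul, map_add, ha, hc]
      have hinv : a⁻¹ + c⁻¹ ≠ 0 := by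
        intro h
        apply hacs
        field_simp at h
        linear_combination h
      rw [div_eq_div_iff hinv hacs, map_ofNat]
      field_simp
      ring
    rw [e2, e1] at h2
    refine ⟨h1, ?_⟩
    have := h2
    field_simp at this
    linear_combination -this/2

lemma lis_eq (a b c d : ℂ) (ha : conj a = a⁻¹) (hb : conj b = b⁻¹)
    (hc : conj c = c⁻¹) (hd : conj d = d⁻¹)
    (ha0 : a ≠ 0) (hb0 : b ≠ 0) (hc0 : c ≠ 0) (hd0 : d ≠ 0)
    (hac : a ≠ c) (hbd : b ≠ d) (hnp : a * c - b * d ≠ 0) :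
    LIS a c b d = (a*c*(b+d) - b*d*(a+c)) / (a*c - b*d) := by
  have hD : (conj a - conj c) * (b - d) - (conj b - conj d) * (a - c) ≠ 0 := by
    intro h
    have h2 : ((conj a - conj c) * (b - d) - (conj b - conj d) * (a - c)) * (a*b*c*d)
        = (a - c) * (b - d) * (a*c - b*d) := by
      rw [ha, hb, hc, hd]
      field_simp
      ring
    rw [h, zero_mul] at h2
    have := mul_ne_zero (mul_ne_zero (sub_ne_zero.mpr hac) (sub_ne_zero.mpr hbd)) hnp
    exact this h2.symm
  rw [LIS, div_eq_div_iff hD hnp, ha, hb, hc, hd]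
  field_simp
  ring

set_option maxHeartbeats 1000000 in
theorem stmt17 (θ₁ θ₂ θ₃ θ₄ : ℝ)
    (h12 : θ₁ < θ₂) (h23 : θ₂ < θ₃) (h34 : θ₃ < θ₄) (h41 : θ₄ < θ₁ + 2 * Real.pi)
    (a b c d : ℂ)
    (hea : a = Complex.exp (Complex.I * (θ₁ : ℂ)))
    (heb : b = Complex.exp (Complex.I * (θ₂ : ℂ)))
    (hec : c = Complex.exp (Complex.I * (θ₃ : ℂ)))
    (hed : d = Complex.exp (Complex.I * (θ₄ : ℂ)))
    (hnp : a * c ≠ b * d)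
    (f : ℂ) (hf : f = LIS a c b d) (hf0 : f ≠ 0)
    (m : ℂ) (hmem : m ∈ Jstar a c ∩ Jstar b d) :
    ‖f‖ < 1 ∧ rho 0 m = rho 0 f / 2 ∧ rho m f = rho 0 f / 2 := by
  have ha0 : a ≠ 0 := hea ▸ Complex.exp_ne_zero _
  have hb0 : b ≠ 0 := heb ▸ Complex.exp_ne_zero _
  have hc0 : c ≠ 0 := hec ▸ Complex.exp_ne_zero _
  have hd0 : d ≠ 0 := hed ▸ Complex.exp_ne_zero _
  have hca : conj a = a⁻¹ := hea ▸ conj_exp θ₁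
  have hcb : conj b = b⁻¹ := heb ▸ conj_exp θ₂
  have hcc : conj c = c⁻¹ := hec ▸ conj_exp θ₃
  have hcd : conj d = d⁻¹ := hed ▸ conj_exp θ₄
  have hac : a ≠ c := by
    rw [hea, hec]; exact exp_ne_exp θ₁ θ₃ (h12.trans h23) (by linarith)
  have hbd : b ≠ d := by
    rw [heb, hed]; exact exp_ne_exp θ₂ θ₄ (h23.trans h34) (by linarith)
  have hnp' : a * c - b * d ≠ 0 := sub_ne_zero.mpr hnp
  have hfe : f = (a*c*(b+d) - b*d*(a+c)) / (a*c - b*d) := by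
    rw [hf, lis_eq a b c d hca hcb hcc hcd ha0 hb0 hc0 hd0 hac hbd hnp']
  have hfc : conj f = ((a+c) - (b+d)) / (a*c - b*d) := by
    rw [hfe, map_div₀, map_sub, map_sub, map_mul, map_mul, map_mul, map_mul,
      map_add, map_add, hca, hcb, hcc, hcd]
    have hconjden : a⁻¹ * c⁻¹ - b⁻¹ * d⁻¹ ≠ 0 := by
      have habcd : a*b*c*d ≠ 0 :=
        mul_ne_zero (mul_ne_zero (mul_ne_zero ha0 hb0) hc0) hd0
      have he : a⁻¹ * c⁻¹ - b⁻¹ * d⁻¹ = (b*d - a*c)/(a*b*c*d) := by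
        field_simp
      rw [he]
      exact div_ne_zero (fun h => hnp' (by linear_combination -h)) habcd
    rw [div_eq_div_iff hconjden hnp']
    field_simp
    ring
  have F1 : f + a*c*conj f = a + c := by
    have : (f + a*c*conj f) * (a*c - b*d) = (a + c) * (a*c - b*d) := by
      rw [hfc, hfe]
      field_simp
      ring
    exact mul_right_cancel₀ hnp' this
  have F2 : f + b*d*conj f = b + d := by
    have : (f + b*d*conj f) * (a*c - b*d) = (b + d) * (a*c - b*d) := by
      rw [hfc, hfe]
      field_simp
      ring
    exact mul_right_cancel₀ hnp' this
  obtain ⟨hm1, E1⟩ := jstar_eq a c m hca hcc ha0 hc0 hac hmem.1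
  obtain ⟨_, E2⟩ := jstar_eq b d m hcb hcd hb0 hd0 hbd hmem.2
  set T : ℂ := ((‖m‖ : ℂ)^2 + 1)/2 with hT
  have hconjm : conj m = T * conj f := by
    have h : conj m * (a*c - b*d) = T * conj f * (a*c - b*d) := by
      linear_combination E1 - E2 - T*F1 + T*F2
    exact mul_right_cancel₀ hnp' h
  have hTconj : conj T = T := by
    rw [hT]
    simp [map_div₀, Complex.conj_ofReal, map_ofNat]
  have hmf : m = T * f := by
    have := congrArg conj hconjm
    simpa [map_mul, hTconj] using this
  -- real part
  set s : ℝ := ‖m‖ with hs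
  set F : ℝ := ‖f‖ with hF
  have hs0 : 0 ≤ s := norm_nonneg m
  have hF0 : 0 < F := by
    rw [hF]
    exact norm_pos_iff.mpr hf0
  have hTr : T = (((s^2 + 1)/2 : ℝ) : ℂ) := by
    rw [hT]; push_cast; ring
  have hTabs : ‖T‖ = (s^2+1)/2 := by
    rw [hTr, Complex.norm_real, Real.norm_eq_abs, abs_of_nonneg (by positivity)]
  have habs : s = (s^2+1)/2 * F := by
    calc s = ‖T * f‖ := by rw [← hmf]
    _ = (s^2+1)/2 * F := by rw [norm_mul, hTabs]
  have hs2 : (0:ℝ) < 1 + s^2 := by positivity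
  have hFs : F = 2*s/(1+s^2) := by
    field_simp
    linarith [habs]
  have hsp : 0 < s := by
    have h1 : 0 < (s^2+1)/2 * F := by positivity
    linarith [habs]
  have h1s : (0:ℝ) < 1 - s^2 := by nlinarith [hm1]
  have hF1 : F < 1 := by
    rw [hFs, div_lt_one hs2]
    nlinarith
  have hsqF : Real.sqrt (1 - F^2) = (1-s^2)/(1+s^2) := by
    have : 1 - F^2 = ((1-s^2)/(1+s^2))^2 := by
      rw [hFs]
      field_simp
      ring
    rw [this, Real.sqrt_sq (by positivity)]
  have hsqs0 : 0 < Real.sqrt (1 - s^2) := Real.sqrt_pos.mpr h1s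
  -- rho computations
  have hrho0m : rho 0 m = 2 * Real.arsinh (s / Real.sqrt (1 - s^2)) := by
    rw [rho]
    simp [hs]
  have hrho0f : rho 0 f = 2 * Real.arsinh (F / Real.sqrt (1 - F^2)) := by
    rw [rho]
    simp [hF]
  have hmfabs : ‖m - f‖ = (1 - s^2)/2 * F := by
    have hdm : m - f = (((s^2-1)/2 : ℝ) : ℂ) * f := by
      rw [hmf, hTr]; push_cast; ring
    rw [hdm, norm_mul, Complex.norm_real, Real.norm_eq_abs, ← hF, abs_of_nonpos (by nlinarith)]
    ring
  have hq2 : Real.sqrt (1-s^2) ^ 2 = 1 - s^2 := Real.sq_sqrt h1s.le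
  have hrhomf : rho m f = 2 * Real.arsinh (s / Real.sqrt (1 - s^2)) := by
    rw [rho, hmfabs, ← hs, ← hF]
    congr 2
    rw [Real.sqrt_mul h1s.le, hsqF, hFs]
    have hsq0 : Real.sqrt (1-s^2) ≠ 0 := hsqs0.ne'
    field_simp
  -- the key identity: 2 * arsinh (s/√(1-s²)) = arsinh (F/√(1-F²))
  have key : 2 * Real.arsinh (s / Real.sqrt (1 - s^2)) = Real.arsinh (F / Real.sqrt (1 - F^2)) := by
    apply Real.sinh_injective
    rw [Real.sinh_arsinh, Real.sinh_two_mul, Real.sinh_arsinh, Real.cosh_arsinh]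
    have hss : Real.sqrt (1-s^2) ^ 2 = 1 - s^2 := Real.sq_sqrt h1s.le
    have hx2 : 1 + (s / Real.sqrt (1-s^2))^2 = (1/Real.sqrt (1-s^2))^2 := by
      rw [div_pow, div_pow, hss]
      field_simp
      ring
    rw [hx2, Real.sqrt_sq (by positivity), hsqF, hFs]
    have hsq0 : Real.sqrt (1-s^2) ≠ 0 := hsqs0.ne'
    field_simp
    exact hss.symm
  refine ⟨hF1, ?_, ?_⟩
  · rw [hrho0m, hrho0f]
    linarith [key]
  · rw [hrhomf, hrho0f]
    linarith [key]
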